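/- Fix r_b, r_γ ≥ 1, a positive integer d, 0 < ε < (1/4)·r_b^{−d}, and an r_γ-uniform hypergraph H with Turán density zero. Then there exist constants 0 < λ = λ(r_b,r_γ,d,ε,H) < ε, L_1 = L_1(r_b,r_γ,d,ε,H), and L_2 = L_2(r_b,r_γ,d,ε,H) such that the following holds. Let (B, γ, F) be an (r_b, r_γ)-uniform fiber bundle with dim_H(B, γ, F) < d and |γ(b)| ≥ ε·C(|F|, r_γ) for all b ∈ V(B). Assume |F| ≥ L_1 and, for every edge E of B and every pair of distinct vertices x, y ∈ E, |γ(x) ∩ γ(y)| ≤ λ·C(|F|, r_γ). If r_b = 1 then B has at most L_2 edges, and if r_b ≥ 2 then χ(B) ≤ L_2. -/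

import Mathlib

open Finset

set_option linter.unusedSectionVars false
set_option maxHeartbeats 2000000

/-- `A` embeds into `B` (i.e. `B` contains a copy of `A`). -/
def Embeds {α β : Type} [DecidableEq β] (A : Finset (Finset α)) (B : Finset (Finset β)) : Prop :=
  ∃ f : α → β, Function.Injective f ∧ ∀ e ∈ A, e.image f ∈ B

/-- The chromatic number of the hypergraph with edge set `A` is at most `K`. -/
def ChromAtMost {α : Type} (A : Finset (Finset α)) (K : ℕ) : Prop :=
  ∃ f : α → Fin K, ∀ e ∈ A, ∃ x ∈ e, ∃ y ∈ e, f x ≠ f y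

/-- The Turán number `ex(N, H)` for `r`-uniform hypergraphs on `N` vertices. -/
noncomputable def exNum {α : Type} (r : ℕ) (H : Finset (Finset α)) (N : ℕ) : ℕ :=
  sSup {c : ℕ | ∃ G : Finset (Finset (Fin N)),
    (∀ e ∈ G, e.card = r) ∧ ¬ Embeds H G ∧ G.card = c}

/-- The section of a set `X` of base vertices in the fiber bundle with fibers `γ`. -/
def sectionOf {V F : Type} [Fintype F] [DecidableEq F]
    (γ : V → Finset (Finset F)) (X : Finset V) : Finset (Finset F) :=
  Finset.univ.filter (fun e => ∀ x ∈ X, e ∈ γ x)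

/-- `dim_H(B, γ, F) ≥ d`. -/
def HasBundleDim {V F α : Type} [DecidableEq V] [Fintype F] [DecidableEq F]
    (BE : Finset (Finset V)) (γ : V → Finset (Finset F))
    (H : Finset (Finset α)) (d : ℕ) : Prop :=
  ∃ M : Finset (Finset V), M.card = d ∧ (∀ e ∈ M, e ∈ BE) ∧
    (∀ e₁ ∈ M, ∀ e₂ ∈ M, e₁ ≠ e₂ → Disjoint e₁ e₂) ∧
    ∀ sel : Finset V → V, (∀ e ∈ M, sel e ∈ e) →
      Embeds H (sectionOf γ (M.image sel))

/-! ### Auxiliary definitions and lemmas -/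

section Aux

variable {V F : Type} [DecidableEq V] [Fintype F] [DecidableEq F]

/-- Section within a restricted ground set `Ω`. -/
def secIn (γ : V → Finset (Finset F)) (Ω : Finset (Finset F)) (X : Finset V) :
    Finset (Finset F) :=
  Ω.filter (fun p => ∀ x ∈ X, p ∈ γ x)

lemma secIn_subset (γ : V → Finset (Finset F)) (Ω : Finset (Finset F)) (X : Finset V) :
    secIn γ Ω X ⊆ Ω := Finset.filter_subset _ _

lemma secIn_empty (γ : V → Finset (Finset F)) (Ω : Finset (Finset F)) :
    secIn γ Ω (∅ : Finset V) = Ω := by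
  simp [secIn]

lemma secIn_insert (γ : V → Finset (Finset F)) (Ω : Finset (Finset F)) (x : V) (X : Finset V) :
    secIn γ Ω (insert x X) = γ x ∩ secIn γ Ω X := by
  ext p
  simp only [secIn, mem_filter, mem_inter, mem_insert]
  constructor
  · rintro ⟨hΩ, h⟩
    exact ⟨h x (Or.inl rfl), hΩ, fun y hy => h y (Or.inr hy)⟩
  · rintro ⟨hx, hΩ, h⟩
    exact ⟨hΩ, fun y hy => hy.elim (fun h' => h' ▸ hx) (h y)⟩

lemma secIn_subset_sectionOf (γ : V → Finset (Finset F)) (Ω : Finset (Finset F)) (X : Finset V) :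
    secIn γ Ω X ⊆ sectionOf γ X := by
  intro p hp
  simp only [secIn, mem_filter] at hp
  simp only [sectionOf, mem_filter, mem_univ, true_and]
  exact hp.2

/-- Inclusion-exclusion style lower bound for the cardinality of a section. -/
lemma secIn_card_lower (γ : V → Finset (Finset F)) (Ω : Finset (Finset F)) (X : Finset V)
    (μ : ℝ) (hμ : μ ≤ 1)
    (h : ∀ x ∈ X, μ * (Ω.card : ℝ) ≤ ((γ x ∩ Ω).card : ℝ)) :
    (1 - (X.card : ℝ) * (1 - μ)) * (Ω.card : ℝ) ≤ ((secIn γ Ω X).card : ℝ) := by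
  classical
  induction X using Finset.induction_on with
  | empty => simp [secIn_empty]
  | @insert a X ha ih =>
    have hIH := ih (fun x hx => h x (mem_insert_of_mem hx))
    have ha' := h a (mem_insert_self a X)
    rw [secIn_insert]
    have e1 : (secIn γ Ω X ∩ γ a).card + (secIn γ Ω X \ γ a).card = (secIn γ Ω X).card :=
      Finset.card_inter_add_card_sdiff _ _
    have e2 : (secIn γ Ω X \ γ a).card ≤ (Ω \ γ a).card :=
      Finset.card_le_card (Finset.sdiff_subset_sdiff (secIn_subset γ Ω X) (le_refl _))
    have e3 : (Ω ∩ γ a).card + (Ω \ γ a).card = Ω.card := Finset.card_inter_add_card_sdiff _ _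
    have c0 : ((γ a ∩ secIn γ Ω X).card : ℝ) = ((secIn γ Ω X ∩ γ a).card : ℝ) := by
      rw [Finset.inter_comm]
    have c5 : ((γ a ∩ Ω).card : ℝ) = ((Ω ∩ γ a).card : ℝ) := by rw [Finset.inter_comm]
    have c1 : ((secIn γ Ω X ∩ γ a).card : ℝ) + ((secIn γ Ω X \ γ a).card : ℝ)
        = ((secIn γ Ω X).card : ℝ) := by exact_mod_cast e1
    have c2 : ((secIn γ Ω X \ γ a).card : ℝ) ≤ ((Ω \ γ a).card : ℝ) := by exact_mod_cast e2
    have c3 : ((Ω ∩ γ a).card : ℝ) + ((Ω \ γ a).card : ℝ) = (Ω.card : ℝ) := by exact_mod_cast e3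
    rw [Finset.card_insert_of_notMem ha]
    push_cast
    rw [c0]
    nlinarith [hIH, ha', c5]

/-- If a `rγ`-uniform hypergraph has more than `exNum rγ H N` edges, it contains `H`. -/
lemma embeds_of_exNum_lt {mh N rγ : ℕ} (H : Finset (Finset (Fin mh)))
    (G : Finset (Finset (Fin N))) (hG : ∀ e ∈ G, e.card = rγ)
    (h : exNum rγ H N < G.card) : Embeds H G := by
  by_contra hne
  have hmem : G.card ∈ {c : ℕ | ∃ G' : Finset (Finset (Fin N)),
      (∀ e ∈ G', e.card = rγ) ∧ ¬ Embeds H G' ∧ G'.card = c} := ⟨G, hG, hne, rfl⟩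
  have hbdd : BddAbove {c : ℕ | ∃ G' : Finset (Finset (Fin N)),
      (∀ e ∈ G', e.card = rγ) ∧ ¬ Embeds H G' ∧ G'.card = c} := by
    refine ⟨Fintype.card (Finset (Fin N)), ?_⟩
    rintro c ⟨G', -, -, rfl⟩
    exact Finset.card_le_univ G'
  exact absurd (le_csSup hbdd hmem) (not_le.2 h)

/-- Proper coloring with at most `K` colors of all edges contained in `W`. -/
def ColorableOn (BE : Finset (Finset V)) (W : Finset V) (K : ℕ) : Prop :=
  ∃ f : V → ℕ, (∀ v ∈ W, f v < K) ∧
    ∀ e ∈ BE, e ⊆ W → ∃ x ∈ e, ∃ y ∈ e, f x ≠ f y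

lemma ColorableOn.mono {BE : Finset (Finset V)} {W : Finset V} {K K' : ℕ}
    (h : ColorableOn BE W K) (hK : K ≤ K') : ColorableOn BE W K' := by
  obtain ⟨f, h1, h2⟩ := h
  exact ⟨f, fun v hv => lt_of_lt_of_le (h1 v hv) hK, h2⟩

lemma block_eq {i j a b K : ℕ} (ha : a < K) (hb : b < K)
    (h : i * K + a = j * K + b) : i = j ∧ a = b := by
  have key : ∀ i' j' a' b' : ℕ, a' < K → i' < j' → i' * K + a' < j' * K + b' := by
    intro i' j' a' b' ha' hij
    calc i' * K + a' < i' * K + K := by omega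
      _ = (i' + 1) * K := by ring
      _ ≤ j' * K := Nat.mul_le_mul_right K hij
      _ ≤ j' * K + b' := Nat.le_add_right _ _
  rcases Nat.lt_trichotomy i j with hij | hij | hij
  · exact absurd h (Nat.ne_of_lt (key i j a b ha hij))
  · refine ⟨hij, ?_⟩; subst hij; omega
  · exact absurd h.symm (Nat.ne_of_lt (key j i b a hb hij))


/-- Counting assembly for the 1-uniform case. -/
lemma count_assembly (BE : Finset (Finset V)) (hBE1 : ∀ e ∈ BE, e.card = 1)
    (C : Finset V) (K : ℕ) :
    ∀ L : List (Finset V), (∀ P ∈ L, (BE.filter (fun e => e ⊆ P)).card ≤ K) →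
    ∀ S : Finset (Finset V), S ⊆ BE →
      (∀ e ∈ S, (e ∩ C).Nonempty ∨ ∃ P ∈ L, (e ∩ P).Nonempty) →
      S.card ≤ 2 ^ C.card + L.length * K := by
  intro L
  induction L with
  | nil =>
    intro _ S hSBE hcov
    have hsub : S ⊆ C.powerset := by
      intro e heS
      rcases hcov e heS with ⟨x, hx⟩ | ⟨P, hP, -⟩
      · rw [Finset.mem_inter] at hx
        have h1 : e.card = 1 := hBE1 e (hSBE heS)
        obtain ⟨v, rfl⟩ := Finset.card_eq_one.1 h1
        have : x = v := by simpa using hx.1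
        subst this
        exact Finset.mem_powerset.2 (Finset.singleton_subset_iff.2 hx.2)
      · exact absurd hP List.not_mem_nil
    calc S.card ≤ C.powerset.card := Finset.card_le_card hsub
      _ = 2 ^ C.card := Finset.card_powerset C
      _ ≤ 2 ^ C.card + [].length * K := by simp
  | cons P L' ih =>
    intro hcnt S hSBE hcov
    classical
    have hsplit : (S.filter (fun e => (e ∩ P).Nonempty)).card
        + (S.filter (fun e => ¬ (e ∩ P).Nonempty)).card = S.card :=
      Finset.card_filter_add_card_filter_not _
    have h1 : (S.filter (fun e => (e ∩ P).Nonempty)).card ≤ K := by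
      refine le_trans (Finset.card_le_card ?_) (hcnt P List.mem_cons_self)
      intro e he
      rw [Finset.mem_filter] at he
      obtain ⟨heS, x, hx⟩ := he
      rw [Finset.mem_inter] at hx
      have h1 : e.card = 1 := hBE1 e (hSBE heS)
      obtain ⟨v, rfl⟩ := Finset.card_eq_one.1 h1
      have : x = v := by simpa using hx.1
      subst this
      exact Finset.mem_filter.2 ⟨hSBE heS, Finset.singleton_subset_iff.2 hx.2⟩
    have h2 : (S.filter (fun e => ¬ (e ∩ P).Nonempty)).card ≤ 2 ^ C.card + L'.length * K := by
      refine ih (fun Q hQ => hcnt Q (List.mem_cons_of_mem _ hQ)) _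
        (fun e he => hSBE (Finset.mem_filter.1 he).1) ?_
      intro e he
      rw [Finset.mem_filter] at he
      rcases hcov e he.1 with hc | ⟨Q, hQ, hx⟩
      · exact Or.inl hc
      · rcases List.mem_cons.1 hQ with rfl | hQ'
        · exact absurd hx he.2
        · exact Or.inr ⟨Q, hQ', hx⟩
    calc S.card = _ + _ := hsplit.symm
      _ ≤ K + (2 ^ C.card + L'.length * K) := add_le_add h1 h2
      _ = 2 ^ C.card + (L'.length + 1) * K := by ring
      _ = 2 ^ C.card + (P :: L').length * K := by simp


/-- Coloring assembly: combine a small cover `C`, a list of recursively colorable regions,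
and a leftover color into a proper coloring of everything inside `W`. -/
lemma color_assembly [LinearOrder V] (BE : Finset (Finset V)) (rb : ℕ) (hrb : 2 ≤ rb)
    (hBE : ∀ e ∈ BE, e.card = rb) (W C : Finset V) (L : List (Finset V)) (K : ℕ)
    (hcover : ∀ e ∈ BE, e ⊆ W → (e ∩ C).Nonempty ∨ ∃ P ∈ L, (e ∩ P).Nonempty)
    (hcol : ∀ P ∈ L, ColorableOn BE P K) :
    ColorableOn BE W (C.card + 1 + L.length * K) := by
  classical
  have hcol' : ∀ n : ℕ, ColorableOn BE (L.getD n ∅) K := by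
    intro n
    by_cases h : n < L.length
    · rw [List.getD_eq_getElem _ _ h]
      exact hcol _ (List.getElem_mem h)
    · rw [List.getD_eq_default _ _ (le_of_not_gt h)]
      refine ⟨fun _ => 0, by simp, ?_⟩
      intro e he hsub
      exfalso
      have : e.card = rb := hBE e he
      have hne : e.Nonempty := Finset.card_pos.1 (by omega)
      obtain ⟨x, hx⟩ := hne
      exact absurd (hsub hx) (Finset.notMem_empty x)
  choose Fc hF1 hF2 using hcol'
  set Q : V → ℕ → Prop := fun v n => n < L.length ∧ v ∈ L.getD n ∅ with hQ
  set f : V → ℕ := fun v =>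
    if hv : v ∈ C then ((C.orderIsoOfFin rfl).symm ⟨v, hv⟩ : Fin C.card)
    else if hq : ∃ n, Q v n then C.card + 1 + (Nat.find hq) * K + Fc (Nat.find hq) v
    else C.card with hf
  have fC : ∀ v (hv : v ∈ C), f v = ((C.orderIsoOfFin rfl).symm ⟨v, hv⟩ : Fin C.card) := by
    intro v hv; rw [hf]; simp [hv]
  have fQ : ∀ v, v ∉ C → ∀ (hq : ∃ n, Q v n),
      f v = C.card + 1 + (Nat.find hq) * K + Fc (Nat.find hq) v := by
    intro v hv hq; rw [hf]; simp [hv, hq]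
  have fN : ∀ v, v ∉ C → (¬ ∃ n, Q v n) → f v = C.card := by
    intro v hv hq; rw [hf]; simp [hv, hq]
  refine ⟨f, ?_, ?_⟩
  · intro v _
    by_cases hv : v ∈ C
    · rw [fC v hv]
      have : (((C.orderIsoOfFin rfl).symm ⟨v, hv⟩ : Fin C.card) : ℕ) < C.card :=
        Fin.is_lt _
      omega
    · by_cases hq : ∃ n, Q v n
      · rw [fQ v hv hq]
        obtain ⟨hlt, hmem⟩ := Nat.find_spec hq
        have h1 : Fc (Nat.find hq) v < K := hF1 _ v hmem
        have h2 : (Nat.find hq) * K + K ≤ L.length * K := by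
          calc (Nat.find hq) * K + K = ((Nat.find hq) + 1) * K := by ring
            _ ≤ L.length * K := Nat.mul_le_mul_right K hlt
        omega
      · rw [fN v hv hq]; omega
  · intro e he hsub
    by_cases hC : (e ∩ C).Nonempty
    · obtain ⟨x, hx⟩ := hC
      rw [Finset.mem_inter] at hx
      have hcard : 1 < e.card := by rw [hBE e he]; omega
      obtain ⟨y, hy, hyx⟩ := Finset.exists_mem_ne hcard x
      refine ⟨x, hx.1, y, hy, ?_⟩
      rw [fC x hx.2]
      by_cases hyC : y ∈ C
      · rw [fC y hyC]
        intro hcontra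
        apply hyx
        have : ((C.orderIsoOfFin rfl).symm ⟨x, hx.2⟩) = ((C.orderIsoOfFin rfl).symm ⟨y, hyC⟩) :=
          Fin.val_injective hcontra
        have := (C.orderIsoOfFin rfl).symm.injective this
        exact (Subtype.mk_eq_mk.1 this).symm
      · have h1 : (((C.orderIsoOfFin rfl).symm ⟨x, hx.2⟩ : Fin C.card) : ℕ) < C.card :=
          Fin.is_lt _
        have h2 : C.card ≤ f y := by
          by_cases hq : ∃ n, Q y n
          · rw [fQ y hyC hq]; omega
          · rw [fN y hyC hq]
        omega
    · have hcov := hcover e he hsub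
      rcases hcov with hc | ⟨P, hP, x, hx⟩
      · exact absurd hc hC
      · rw [Finset.mem_inter] at hx
        -- every vertex of e is not in C
        have heC : ∀ v ∈ e, v ∉ C := by
          intro v hv hvC
          exact hC ⟨v, Finset.mem_inter.2 ⟨hv, hvC⟩⟩
        obtain ⟨n0, hn0, hPn0⟩ := List.mem_iff_getElem.1 hP
        have hqx : ∃ n, Q x n := ⟨n0, hn0, by
          rw [List.getD_eq_getElem _ _ hn0, hPn0]; exact hx.2⟩
        by_contra hno
        push_neg at hno
        -- every vertex has the ∃-branch and the same index
        set n := Nat.find hqx with hn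
        have hfx : f x = C.card + 1 + n * K + Fc n x := fQ x (heC x hx.1) hqx
        have hall : ∀ y ∈ e, y ∈ L.getD n ∅ ∧ Fc n y = Fc n x := by
          intro y hy
          by_cases hqy : ∃ m, Q y m
          · have hfy := fQ y (heC y hy) hqy
            have heq := hno x hx.1 y hy
            rw [hfx, hfy] at heq
            have heq2 : n * K + Fc n x = (Nat.find hqy) * K + Fc (Nat.find hqy) y := by omega
            have hx1 : Fc n x < K := hF1 n x (Nat.find_spec hqx).2
            have hy1 : Fc (Nat.find hqy) y < K := hF1 _ y (Nat.find_spec hqy).2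
            obtain ⟨hnm, hrem⟩ := block_eq hx1 hy1 heq2
            have hmem := (Nat.find_spec hqy).2
            rw [← hnm] at hmem hrem
            exact ⟨hmem, hrem.symm⟩
          · exfalso
            have h3 := fN y (heC y hy) hqy
            have h2 := hno x hx.1 y hy
            rw [hfx, h3] at h2
            omega
        obtain ⟨a, ha, b, hb, hab⟩ := hF2 n e he (fun y hy => (hall y hy).1)
        exact hab ((hall a ha).2.trans (hall b hb).2.symm)



/-- The core structural lemma: inside a region `W` whose fibers are `μ`-dense relative to a
ground set `Ω`, either an edge meets a bounded cover, or it meets one of boundedly many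
"poor" regions, each of which has strictly larger relative density. -/
lemma core_lemma {mh : ℕ} (H : Finset (Finset (Fin mh)))
    (BE : Finset (Finset V)) (γ : V → Finset (Finset F))
    (rb rγ d T : ℕ) (ε N : ℝ)
    (hrb : 1 ≤ rb) (hd : 0 < d)
    (hε0 : 0 < ε) (hε1 : ε ≤ 1)
    (hN0 : 0 < N)
    (hBE : ∀ e ∈ BE, e.card = rb)
    (hγc : ∀ b, ∀ e ∈ γ b, e.card = rγ)
    (hdim : ¬ HasBundleDim BE γ H d)
    (hEmb : ∀ G : Finset (Finset F), (∀ e ∈ G, e.card = rγ) →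
      (ε/2) ^ (T + d) * N < (G.card : ℝ) → Embeds H G)
    (n : ℕ) (W : Finset V) (Ω : Finset (Finset F)) (μ : ℝ)
    (hn : n ≤ T)
    (inv1 : ∀ v ∈ W, μ * (Ω.card : ℝ) ≤ ((γ v ∩ Ω).card : ℝ))
    (inv2 : ε ≤ μ)
    (inv3 : 1 - 1 / (2 * (d : ℝ)) ≤ μ + (n : ℝ) * (ε/2) ^ (d+1))
    (inv4 : (ε/2) ^ (T - n) * N ≤ (Ω.card : ℝ)) :
    ∃ (C : Finset V) (L : List (Finset V × Finset (Finset F))),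
      C ⊆ W ∧ C.card ≤ rb * (d-1) ∧ L.length ≤ 2 ^ (rb*d) ∧
      (∀ e ∈ BE, e ⊆ W → (e ∩ C).Nonempty ∨ ∃ p ∈ L, (e ∩ p.1).Nonempty) ∧
      (∀ p ∈ L, p.1 ⊆ W ∧ ((p.1).Nonempty →
        1 ≤ n ∧ (∀ v ∈ p.1, (μ + (ε/2) ^ (d+1)) * (p.2.card : ℝ) ≤ ((γ v ∩ p.2).card : ℝ)) ∧
        (ε/2) ^ (T - (n-1)) * N ≤ (p.2.card : ℝ))) := by
  classical
  rcases W.eq_empty_or_nonempty with rfl | hW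
  · refine ⟨∅, [], Finset.Subset.refl _, by simp, by simp, ?_, by simp⟩
    intro e he hsub
    exfalso
    have h1 : e.card = rb := hBE e he
    have hne : e.Nonempty := Finset.card_pos.1 (by omega)
    obtain ⟨x, hx⟩ := hne
    exact absurd (hsub hx) (Finset.notMem_empty x)
  obtain ⟨v₀, hv₀⟩ := hW
  have hε2 : (0:ℝ) < ε/2 := by linarith
  have hε2' : ε/2 ≤ 1 := by linarith
  have hΩpos : (0:ℝ) < (Ω.card : ℝ) := by
    refine lt_of_lt_of_le ?_ inv4
    positivity
  have hμ0 : 0 < μ := lt_of_lt_of_le hε0 inv2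
  have hμ1 : μ ≤ 1 := by
    have h := inv1 v₀ hv₀
    have h2 : ((γ v₀ ∩ Ω).card : ℝ) ≤ (Ω.card : ℝ) := by
      exact_mod_cast Finset.card_le_card (Finset.inter_subset_right)
    nlinarith
  obtain ⟨δ, hδ0, hδsucc⟩ : ∃ δ : ℕ → ℝ, δ 0 = 1 ∧ ∀ j, δ (j+1) = μ * (ε/2) ^ j :=
    ⟨fun k => match k with
      | 0 => 1
      | (j+1) => μ * (ε/2) ^ j, rfl, fun j => rfl⟩
  set Good : Finset (Finset V) → Prop := fun M =>
    (∀ E ∈ M, E ∈ BE ∧ E ⊆ W) ∧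
    (∀ E₁ ∈ M, ∀ E₂ ∈ M, E₁ ≠ E₂ → Disjoint E₁ E₂) ∧
    ∀ sel : Finset V → V, (∀ E ∈ M, sel E ∈ E) →
      δ M.card * (Ω.card : ℝ) ≤ ((secIn γ Ω (M.image sel)).card : ℝ) with hGood
  set Pk : ℕ → Prop := fun k => ∃ M, M.card = k ∧ Good M with hPk
  have hP0 : Pk 0 := by
    refine ⟨∅, rfl, by simp, by simp, ?_⟩
    intro sel _
    rw [Finset.image_empty, secIn_empty, Finset.card_empty, hδ0]
    linarith
  have hPd : ¬ Pk d := by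
    rintro ⟨M, hMcard, hMBE, hMdisj, hMsec⟩
    apply hdim
    refine ⟨M, hMcard, fun e he => (hMBE e he).1, hMdisj, ?_⟩
    intro sel hsel
    apply hEmb
    · intro p hp
      simp only [sectionOf, Finset.mem_filter, Finset.mem_univ, true_and] at hp
      have hMne : M.Nonempty := Finset.card_pos.1 (by omega)
      obtain ⟨E₀, hE₀⟩ := hMne
      exact hγc (sel E₀) p (hp (sel E₀) (Finset.mem_image_of_mem sel hE₀))
    · have h1 := hMsec sel hsel
      rw [hMcard] at h1
      have h2 : ((secIn γ Ω (M.image sel)).card : ℝ)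
          ≤ ((sectionOf γ (M.image sel)).card : ℝ) := by
        exact_mod_cast Finset.card_le_card (secIn_subset_sectionOf γ Ω (M.image sel))
      have hδd : δ d = μ * (ε/2) ^ (d-1) := by
        obtain ⟨j, rfl⟩ := Nat.exists_eq_succ_of_ne_zero (Nat.pos_iff_ne_zero.1 hd)
        simp [hδsucc]
      have hpow : (ε/2) ^ T ≤ (ε/2) ^ (T - n) :=
        pow_le_pow_of_le_one (le_of_lt hε2) hε2' (Nat.sub_le T n)
      have key : 2 * ((ε/2) ^ (T + d) * N) ≤ δ d * (Ω.card : ℝ) := by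
        have e1 : δ d * (Ω.card : ℝ) ≥ (ε * (ε/2) ^ (d-1)) * ((ε/2) ^ (T-n) * N) := by
          rw [hδd]
          have h3 : (0:ℝ) ≤ (ε/2) ^ (d-1) := by positivity
          have h4 : ε * (ε/2)^(d-1) ≤ μ * (ε/2)^(d-1) :=
            mul_le_mul_of_nonneg_right inv2 h3
          have h5 : (0:ℝ) ≤ ε * (ε/2)^(d-1) := by positivity
          nlinarith [inv4, hΩpos]
        have e2 : (ε * (ε/2) ^ (d-1)) * ((ε/2) ^ T * N)
            ≤ (ε * (ε/2) ^ (d-1)) * ((ε/2) ^ (T-n) * N) := by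
          have h5 : (0:ℝ) ≤ ε * (ε/2)^(d-1) := by positivity
          exact mul_le_mul_of_nonneg_left (mul_le_mul_of_nonneg_right hpow hN0.le) h5
        have e3 : (ε * (ε/2) ^ (d-1)) * ((ε/2) ^ T * N) = 2 * ((ε/2) ^ (T + d) * N) := by
          have hTd : T + d = (T + (d-1)) + 1 := by omega
          rw [hTd, pow_add, pow_add, pow_succ]
          ring
        linarith
      have hτpos : (0:ℝ) < (ε/2) ^ (T + d) * N := by positivity
      linarith
  have hkex : ∃ k, k < d ∧ Pk k ∧ ¬ Pk (k+1) := by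
    have hk : Pk (Nat.findGreatest Pk d) := Nat.findGreatest_spec (Nat.zero_le d) hP0
    have hkle : Nat.findGreatest Pk d ≤ d := Nat.findGreatest_le d
    have hklt : Nat.findGreatest Pk d < d := lt_of_le_of_ne hkle (fun h => hPd (h ▸ hk))
    exact ⟨Nat.findGreatest Pk d, hklt, hk,
      Nat.findGreatest_is_greatest (Nat.lt_succ_self _) (by omega)⟩
  obtain ⟨k, hklt, hk, hnoext⟩ := hkex
  obtain ⟨M, hMcard, hMBE, hMdisj, hMsec⟩ := hk
  set C := M.biUnion id with hC
  have hCW : C ⊆ W := Finset.biUnion_subset.2 fun E hE => (hMBE E hE).2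
  have hCcard : C.card ≤ rb * (d-1) := by
    calc C.card ≤ ∑ E ∈ M, (id E).card := Finset.card_biUnion_le
      _ = ∑ E ∈ M, rb := Finset.sum_congr rfl (fun E hE => hBE E (hMBE E hE).1)
      _ = M.card * rb := by rw [Finset.sum_const, smul_eq_mul]
      _ ≤ (d-1) * rb := Nat.mul_le_mul_right rb (by omega)
      _ = rb * (d-1) := Nat.mul_comm _ _
  set 𝒯 := C.powerset.filter (fun X => ∀ E ∈ M, (X ∩ E).card = 1) with h𝒯
  set Pt : Finset V → Finset V := fun X =>
    W.filter (fun v => ((γ v ∩ secIn γ Ω X).card : ℝ) < δ (k+1) * (Ω.card : ℝ)) with hPt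
  set L := 𝒯.toList.map (fun X => (Pt X, Ω \ secIn γ Ω X)) with hL
  have hLlen : L.length ≤ 2 ^ (rb*d) := by
    rw [hL, List.length_map, Finset.length_toList]
    calc 𝒯.card ≤ C.powerset.card := Finset.card_le_card (Finset.filter_subset _ _)
      _ = 2 ^ C.card := Finset.card_powerset C
      _ ≤ 2 ^ (rb*d) := Nat.pow_le_pow_right (by omega)
          (le_trans hCcard (Nat.mul_le_mul_left rb (by omega)))
  refine ⟨C, L, hCW, hCcard, hLlen, ?_, ?_⟩
  · -- cover property
    intro e he hew
    by_cases hee : (e ∩ C).Nonempty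
    · exact Or.inl hee
    right
    have heC : e ∩ C = ∅ := Finset.not_nonempty_iff_eq_empty.1 hee
    have hene : e.Nonempty := Finset.card_pos.1 (by have := hBE e he; omega)
    have heM : e ∉ M := by
      intro h
      have h1 : e ⊆ C := Finset.subset_biUnion_of_mem id h
      have h2 : e ∩ C = e := Finset.inter_eq_left.2 h1
      rw [heC] at h2
      exact absurd h2.symm (Finset.nonempty_iff_ne_empty.1 hene)
    have hdisj_e : ∀ E ∈ M, Disjoint e E := by
      intro E hE
      rw [Finset.disjoint_left]
      intro a hae haE
      have : a ∈ e ∩ C := Finset.mem_inter.2 ⟨hae, (Finset.subset_biUnion_of_mem id hE) haE⟩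
      rw [heC] at this
      exact absurd this (Finset.notMem_empty a)
    have hnotgood : ¬ Good (insert e M) := by
      intro hg
      exact hnoext ⟨insert e M, by rw [Finset.card_insert_of_notMem heM, hMcard], hg⟩
    have hsecfail : ∃ sel : Finset V → V, (∀ E ∈ insert e M, sel E ∈ E) ∧
        ((secIn γ Ω ((insert e M).image sel)).card : ℝ)
          < δ ((insert e M).card) * (Ω.card : ℝ) := by
      by_contra hcon
      push_neg at hcon
      apply hnotgood
      refine ⟨?_, ?_, ?_⟩
      · intro E hE
        rcases Finset.mem_insert.1 hE with rfl | hE'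
        · exact ⟨he, hew⟩
        · exact hMBE E hE'
      · intro E₁ hE₁ E₂ hE₂ hne12
        rcases Finset.mem_insert.1 hE₁ with rfl | h1
        · rcases Finset.mem_insert.1 hE₂ with rfl | h2
          · exact absurd rfl hne12
          · exact hdisj_e E₂ h2
        · rcases Finset.mem_insert.1 hE₂ with rfl | h2
          · exact (hdisj_e E₁ h1).symm
          · exact hMdisj E₁ h1 E₂ h2 hne12
      · intro sel hsel
        exact hcon sel hsel
    obtain ⟨sel, hselval, hselbad⟩ := hsecfail
    rw [Finset.card_insert_of_notMem heM, hMcard] at hselbad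
    set X := M.image sel with hX
    have himg : (insert e M).image sel = insert (sel e) X := Finset.image_insert sel e M
    rw [himg, secIn_insert] at hselbad
    have hXC : X ⊆ C := by
      intro z hz
      obtain ⟨E, hE, rfl⟩ := Finset.mem_image.1 hz
      exact (Finset.subset_biUnion_of_mem id hE) (hselval E (Finset.mem_insert_of_mem hE))
    have hX𝒯 : X ∈ 𝒯 := by
      rw [h𝒯, Finset.mem_filter, Finset.mem_powerset]
      refine ⟨hXC, ?_⟩
      intro E hE
      have hXE : X ∩ E = {sel E} := by
        apply Finset.Subset.antisymm
        · intro z hz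
          rw [Finset.mem_inter] at hz
          obtain ⟨E', hE', rfl⟩ := Finset.mem_image.1 hz.1
          rcases eq_or_ne E' E with rfl | hne'
          · exact Finset.mem_singleton_self _
          · exact absurd hz.2 (Finset.disjoint_left.1 (hMdisj E' hE' E hE hne')
              (hselval E' (Finset.mem_insert_of_mem hE')))
        · rw [Finset.singleton_subset_iff, Finset.mem_inter]
          exact ⟨Finset.mem_image_of_mem sel hE, hselval E (Finset.mem_insert_of_mem hE)⟩
      rw [hXE, Finset.card_singleton]
    have hxPt : sel e ∈ Pt X := by
      rw [hPt, Finset.mem_filter]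
      exact ⟨hew (hselval e (Finset.mem_insert_self e M)), hselbad⟩
    refine ⟨(Pt X, Ω \ secIn γ Ω X), ?_, ?_⟩
    · rw [hL]
      exact List.mem_map_of_mem (Finset.mem_toList.2 hX𝒯)
    · exact ⟨sel e, Finset.mem_inter.2 ⟨hselval e (Finset.mem_insert_self e M), hxPt⟩⟩
  · -- recursion property
    intro p hp
    rw [hL] at hp
    obtain ⟨X, hX𝒯l, rfl⟩ := List.mem_map.1 hp
    have hX𝒯 : X ∈ 𝒯 := Finset.mem_toList.1 hX𝒯l
    rw [h𝒯, Finset.mem_filter, Finset.mem_powerset] at hX𝒯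
    obtain ⟨hXC, hX1⟩ := hX𝒯
    have hPtW : Pt X ⊆ W := Finset.filter_subset _ _
    refine ⟨hPtW, ?_⟩
    intro hne
    have hXne : ∀ E ∈ M, (X ∩ E).Nonempty := fun E hE =>
      Finset.card_pos.1 (by rw [hX1 E hE]; omega)
    set sel : Finset V → V := fun E => if h : (X ∩ E).Nonempty then h.choose else v₀ with hsel
    have hselmem : ∀ E ∈ M, sel E ∈ X ∩ E := by
      intro E hE
      rw [hsel]
      simp only [dif_pos (hXne E hE)]
      exact (hXne E hE).choose_spec
    have himg : M.image sel = X := by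
      apply Finset.Subset.antisymm
      · intro z hz
        obtain ⟨E, hE, rfl⟩ := Finset.mem_image.1 hz
        exact (Finset.mem_inter.1 (hselmem E hE)).1
      · intro z hz
        obtain ⟨E, hE, hzE⟩ := Finset.mem_biUnion.1 (hXC hz)
        have h1 : z = sel E := Finset.card_le_one.1 (le_of_eq (hX1 E hE)) z
            (Finset.mem_inter.2 ⟨hz, hzE⟩) (sel E) (hselmem E hE)
        rw [h1]
        exact Finset.mem_image_of_mem sel hE
    have hXW : X ⊆ W := fun z hz => hCW (hXC hz)
    have hXcard : X.card ≤ k := by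
      rw [← himg, ← hMcard]
      exact Finset.card_image_le
    have hsec : δ k * (Ω.card : ℝ) ≤ ((secIn γ Ω X).card : ℝ) := by
      have h := hMsec sel (fun E hE => (Finset.mem_inter.1 (hselmem E hE)).2)
      rwa [himg, hMcard] at h
    have hk1 : 1 ≤ k := by
      by_contra h
      have hk0 : k = 0 := by omega
      have hM0 : M = ∅ := Finset.card_eq_zero.1 (by rw [hMcard, hk0])
      have hX0 : X = ∅ := by
        have hC0 : C = ∅ := by rw [hC, hM0]; simp
        rw [← Finset.subset_empty, ← hC0]
        exact hXC
      obtain ⟨v, hv⟩ := hne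
      simp only [hPt, Finset.mem_filter] at hv
      obtain ⟨hvW, hvlt⟩ := hv
      rw [hX0, secIn_empty] at hvlt
      rw [hk0] at hvlt
      have h3 : δ (0+1) = μ := by rw [hδsucc]; simp
      rw [h3] at hvlt
      exact absurd (inv1 v hvW) (not_le.2 hvlt)
    have hδk : δ k = μ * (ε/2) ^ (k-1) := by
      have h := hδsucc (k-1)
      rw [show k-1+1 = k from by omega] at h
      exact h
    have hδk1 : δ (k+1) = δ k * (ε/2) := by
      have hpk : (ε/2)^k = (ε/2)^(k-1) * (ε/2) := by
        rw [← pow_succ, show k-1+1 = k from by omega]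
      rw [hδsucc, hδk, hpk]
      ring
    have hδkpos : 0 < δ k := by rw [hδk]; positivity
    have hδkle : δ k ≤ μ := by
      rw [hδk]
      have h2 : (ε/2) ^ (k-1) ≤ 1 := pow_le_one₀ hε2.le hε2'
      nlinarith
    have hd2 : 2 ≤ d := by omega
    have hδklb : μ * (ε/2)^(d-2) ≤ δ k := by
      rw [hδk]
      have h2 : (ε/2)^(d-2) ≤ (ε/2)^(k-1) := pow_le_pow_of_le_one hε2.le hε2' (by omega)
      nlinarith
    have hkey : (μ + (ε/2)^(d+1)) * (1 - δ k) ≤ μ - δ (k+1) := by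
      have hc : (ε/2)^(d+1) ≤ δ k * (μ - ε/2) := by
        have h1 : μ/2 ≤ μ - ε/2 := by linarith
        have h2 : (μ * (ε/2)^(d-2)) * (μ/2) ≤ δ k * (μ - ε/2) := by
          have hp : (0:ℝ) ≤ (ε/2)^(d-2) := by positivity
          nlinarith [hδklb]
        have h3 : (ε * (ε/2)^(d-2)) * (ε/2) ≤ (μ * (ε/2)^(d-2)) * (μ/2) := by
          have hp : (0:ℝ) ≤ (ε/2)^(d-2) := by positivity
          exact mul_le_mul (mul_le_mul_of_nonneg_right inv2 hp)
            (by linarith) (by positivity) (by positivity)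
        have h4 : (ε * (ε/2)^(d-2)) * (ε/2) = 2 * (ε/2)^d := by
          calc (ε * (ε/2)^(d-2)) * (ε/2) = (ε/2)^(d-2) * (ε/2)^2 * 2 := by ring
            _ = (ε/2)^((d-2)+2) * 2 := by rw [pow_add]
            _ = 2 * (ε/2)^d := by rw [show (d-2)+2 = d by omega]; ring
        have h5 : (ε/2)^(d+1) ≤ 2*(ε/2)^d := by
          rw [pow_succ]
          nlinarith [pow_pos hε2 d]
        linarith
      rw [hδk1]
      have hcnn : (0:ℝ) ≤ (ε/2)^(d+1) := by positivity
      nlinarith [hδkpos, hδkle, hμ1]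
    have hn1 : 1 ≤ n := by
      by_contra h
      have hn0 : n = 0 := by omega
      have hμcap : 1 - 1/(2*(d:ℝ)) ≤ μ := by
        rw [hn0] at inv3
        simpa using inv3
      obtain ⟨v, hv⟩ := hne
      simp only [hPt, Finset.mem_filter] at hv
      obtain ⟨hvW, hvlt⟩ := hv
      have hins : secIn γ Ω (insert v X) = γ v ∩ secIn γ Ω X := secIn_insert γ Ω v X
      have hlow := secIn_card_lower γ Ω (insert v X) μ hμ1 (by
        intro x hx
        rcases Finset.mem_insert.1 hx with rfl | hx'
        · exact inv1 x hvW
        · exact inv1 x (hXW hx'))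
      rw [hins] at hlow
      have hcard_ins : (((insert v X).card : ℕ) : ℝ) ≤ (k:ℝ) + 1 := by
        have h1 : (insert v X).card ≤ X.card + 1 := Finset.card_insert_le v X
        have h2 : X.card + 1 ≤ k + 1 := by omega
        exact_mod_cast le_trans h1 h2
      have hcoef : (1 - ((k:ℝ)+1) * (1-μ)) * (Ω.card:ℝ)
          ≤ ((γ v ∩ secIn γ Ω X).card : ℝ) := by
        have h3 : (1 - ((k:ℝ)+1) * (1-μ)) ≤ (1 - ((insert v X).card : ℝ) * (1-μ)) := by
          nlinarith [hcard_ins, hμ1]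
        nlinarith [hlow, hΩpos]
      have h6 : ((k:ℝ)+1) * (1-μ) ≤ 1/2 := by
        have hk_d : (k:ℝ)+1 ≤ (d:ℝ) := by exact_mod_cast (by omega : k+1 ≤ d)
        have h7 : 1-μ ≤ 1/(2*(d:ℝ)) := by linarith
        have hdpos : (0:ℝ) < (d:ℝ) := by exact_mod_cast hd
        have h8 : ((k:ℝ)+1) * (1-μ) ≤ (d:ℝ) * (1/(2*(d:ℝ))) := by
          have h9 : (0:ℝ) ≤ 1 - μ := by linarith
          nlinarith
        have h10 : (d:ℝ) * (1/(2*(d:ℝ))) = 1/2 := by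
          field_simp
        linarith
      have h8 : δ (k+1) ≤ 1/2 := by
        rw [hδsucc]
        have h11 : (ε/2)^k ≤ (ε/2)^1 := pow_le_pow_of_le_one hε2.le hε2' hk1
        have h12 : (0:ℝ) ≤ (ε/2)^k := by positivity
        nlinarith [hμ1, hμ0]
      nlinarith [hvlt, hcoef, hΩpos]
    have hSsub : secIn γ Ω X ⊆ Ω := secIn_subset γ Ω X
    have hΩ'eq : ((Ω \ secIn γ Ω X).card : ℝ)
        = (Ω.card : ℝ) - ((secIn γ Ω X).card : ℝ) := by
      rw [Finset.card_sdiff_of_subset hSsub, Nat.cast_sub (Finset.card_le_card hSsub)]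
    have hinv1' : ∀ v ∈ Pt X, (μ + (ε/2)^(d+1)) * ((Ω \ secIn γ Ω X).card:ℝ)
        ≤ ((γ v ∩ (Ω \ secIn γ Ω X)).card : ℝ) := by
      intro v hv
      simp only [hPt, Finset.mem_filter] at hv
      obtain ⟨hvW, hvlt⟩ := hv
      have hveq : γ v ∩ (Ω \ secIn γ Ω X) = (γ v ∩ Ω) \ (γ v ∩ secIn γ Ω X) := by
        ext q
        simp only [Finset.mem_inter, Finset.mem_sdiff]
        tauto
      have hsub2 : γ v ∩ secIn γ Ω X ⊆ γ v ∩ Ω :=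
        Finset.inter_subset_inter (Finset.Subset.refl _) hSsub
      have hcard2 : ((γ v ∩ (Ω \ secIn γ Ω X)).card : ℝ)
          = ((γ v ∩ Ω).card:ℝ) - ((γ v ∩ secIn γ Ω X).card:ℝ) := by
        rw [hveq, Finset.card_sdiff_of_subset hsub2, Nat.cast_sub (Finset.card_le_card hsub2)]
      have h1 := inv1 v hvW
      have hΩ'le : ((Ω \ secIn γ Ω X).card:ℝ) ≤ (1 - δ k) * (Ω.card:ℝ) := by
        rw [hΩ'eq]
        nlinarith [hsec]
      have hcpos : (0:ℝ) ≤ μ + (ε/2)^(d+1) := by positivity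
      calc (μ + (ε/2)^(d+1)) * ((Ω \ secIn γ Ω X).card:ℝ)
          ≤ (μ + (ε/2)^(d+1)) * ((1 - δ k) * (Ω.card:ℝ)) :=
            mul_le_mul_of_nonneg_left hΩ'le hcpos
        _ ≤ (μ - δ (k+1)) * (Ω.card:ℝ) := by nlinarith [hkey, hΩpos]
        _ ≤ ((γ v ∩ Ω).card:ℝ) - δ (k+1) * (Ω.card:ℝ) := by linarith
        _ ≤ ((γ v ∩ Ω).card:ℝ) - ((γ v ∩ secIn γ Ω X).card:ℝ) := by linarith
        _ = _ := hcard2.symm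
    refine ⟨hn1, hinv1', ?_⟩
    obtain ⟨w, hw⟩ := hne
    have h9 := hinv1' w hw
    simp only [hPt, Finset.mem_filter] at hw
    obtain ⟨hwW, hwlt⟩ := hw
    have hwcard : ((γ w ∩ (Ω \ secIn γ Ω X)).card : ℝ) ≤ ((Ω \ secIn γ Ω X).card : ℝ) := by
      exact_mod_cast Finset.card_le_card Finset.inter_subset_right
    have hveq : γ w ∩ (Ω \ secIn γ Ω X) = (γ w ∩ Ω) \ (γ w ∩ secIn γ Ω X) := by
      ext q
      simp only [Finset.mem_inter, Finset.mem_sdiff]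
      tauto
    have hsub2 : γ w ∩ secIn γ Ω X ⊆ γ w ∩ Ω :=
      Finset.inter_subset_inter (Finset.Subset.refl _) hSsub
    have hwlow : (μ - δ (k+1)) * (Ω.card:ℝ) ≤ ((Ω \ secIn γ Ω X).card : ℝ) := by
      have hcard2 : ((γ w ∩ (Ω \ secIn γ Ω X)).card : ℝ)
          = ((γ w ∩ Ω).card:ℝ) - ((γ w ∩ secIn γ Ω X).card:ℝ) := by
        rw [hveq, Finset.card_sdiff_of_subset hsub2, Nat.cast_sub (Finset.card_le_card hsub2)]
      have h1 := inv1 w hwW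
      nlinarith [hwcard, hcard2, hwlt]
    have hδk1le : δ (k+1) ≤ μ/2 := by
      rw [hδsucc]
      have h11 : (ε/2)^k ≤ (ε/2)^1 := pow_le_pow_of_le_one hε2.le hε2' hk1
      have h12 : (0:ℝ) ≤ (ε/2)^k := by positivity
      nlinarith [hμ0, hε1]
    have hhalf : (ε/2) * (Ω.card:ℝ) ≤ ((Ω \ secIn γ Ω X).card : ℝ) := by
      have : ε/2 ≤ μ - δ (k+1) := by linarith
      nlinarith [hwlow, hΩpos]
    have hTn : T - (n-1) = (T-n) + 1 := by omega
    rw [hTn, pow_succ]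
    calc (ε/2)^(T-n) * (ε/2) * N = (ε/2) * ((ε/2)^(T-n) * N) := by ring
      _ ≤ (ε/2) * (Ω.card:ℝ) := mul_le_mul_of_nonneg_left inv4 hε2.le
      _ ≤ _ := hhalf


/-- Color-count recursion bound. -/
def gFun (rb d : ℕ) : ℕ → ℕ
  | 0 => rb*d + 1 + 2^(rb*d)
  | (n+1) => rb*d + 1 + 2^(rb*d) * gFun rb d n

/-- Edge-count recursion bound. -/
def gcFun (rb d : ℕ) : ℕ → ℕ
  | 0 => 2^(rb*d)
  | (n+1) => 2^(rb*d) + 2^(rb*d) * gcFun rb d n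

lemma gFun_pos (rb d : ℕ) (n : ℕ) : 1 ≤ gFun rb d n := by
  have h : 0 < 2^(rb*d) := Nat.two_pow_pos _
  cases n <;> simp only [gFun] <;> omega

lemma color_wrapper [LinearOrder V] {mh : ℕ} (H : Finset (Finset (Fin mh)))
    (BE : Finset (Finset V)) (γ : V → Finset (Finset F))
    (rb rγ d T : ℕ) (ε N : ℝ)
    (hrb : 1 ≤ rb) (hrb2 : 2 ≤ rb) (hd : 0 < d)
    (hε0 : 0 < ε) (hε1 : ε ≤ 1)
    (hN0 : 0 < N)
    (hBE : ∀ e ∈ BE, e.card = rb)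
    (hγc : ∀ b, ∀ e ∈ γ b, e.card = rγ)
    (hdim : ¬ HasBundleDim BE γ H d)
    (hEmb : ∀ G : Finset (Finset F), (∀ e ∈ G, e.card = rγ) →
      (ε/2) ^ (T + d) * N < (G.card : ℝ) → Embeds H G) :
    ∀ (n : ℕ) (W : Finset V) (Ω : Finset (Finset F)) (μ : ℝ), n ≤ T →
    (∀ v ∈ W, μ * (Ω.card : ℝ) ≤ ((γ v ∩ Ω).card : ℝ)) →
    ε ≤ μ →
    1 - 1 / (2 * (d : ℝ)) ≤ μ + (n : ℝ) * (ε/2) ^ (d+1) →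
    (ε/2) ^ (T - n) * N ≤ (Ω.card : ℝ) →
    ColorableOn BE W (gFun rb d n) := by
  intro n
  induction n with
  | zero =>
    intro W Ω μ hn i1 i2 i3 i4
    obtain ⟨C, L, hCW, hCc, hLl, hcover, hrec⟩ := core_lemma H BE γ rb rγ d T ε N
      hrb hd hε0 hε1 hN0 hBE hγc hdim hEmb 0 W Ω μ hn i1 i2 i3 i4
    have hcover' : ∀ e ∈ BE, e ⊆ W →
        (e ∩ C).Nonempty ∨ ∃ P ∈ L.map Prod.fst, (e ∩ P).Nonempty := by
      intro e he hew
      rcases hcover e he hew with h | ⟨p, hp, hx⟩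
      · exact Or.inl h
      · exact Or.inr ⟨p.1, List.mem_map_of_mem hp, hx⟩
    have hcol : ∀ P ∈ L.map Prod.fst, ColorableOn BE P 1 := by
      intro P hP
      obtain ⟨p, hp, rfl⟩ := List.mem_map.1 hP
      rcases p.1.eq_empty_or_nonempty with h0 | hne
      · rw [h0]
        refine ⟨fun _ => 0, by simp, ?_⟩
        intro e he hsub
        exfalso
        have h1 : e.card = rb := hBE e he
        obtain ⟨x, hx⟩ := Finset.card_pos.1 (by omega : 0 < e.card)
        exact absurd (hsub hx) (Finset.notMem_empty x)
      · exact absurd ((hrec p hp).2 hne).1 (by omega)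
    have hasm := color_assembly BE rb hrb2 hBE W C (L.map Prod.fst) 1 hcover' hcol
    refine hasm.mono ?_
    have h1 : (L.map Prod.fst).length ≤ 2^(rb*d) := by rw [List.length_map]; exact hLl
    have h2 : C.card ≤ rb*d := le_trans hCc (Nat.mul_le_mul_left rb (by omega))
    simp only [gFun]
    omega
  | succ n ih =>
    intro W Ω μ hn i1 i2 i3 i4
    obtain ⟨C, L, hCW, hCc, hLl, hcover, hrec⟩ := core_lemma H BE γ rb rγ d T ε N
      hrb hd hε0 hε1 hN0 hBE hγc hdim hEmb (n+1) W Ω μ hn i1 i2 i3 i4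
    have hcover' : ∀ e ∈ BE, e ⊆ W →
        (e ∩ C).Nonempty ∨ ∃ P ∈ L.map Prod.fst, (e ∩ P).Nonempty := by
      intro e he hew
      rcases hcover e he hew with h | ⟨p, hp, hx⟩
      · exact Or.inl h
      · exact Or.inr ⟨p.1, List.mem_map_of_mem hp, hx⟩
    have hcol : ∀ P ∈ L.map Prod.fst, ColorableOn BE P (gFun rb d n) := by
      intro P hP
      obtain ⟨p, hp, rfl⟩ := List.mem_map.1 hP
      rcases p.1.eq_empty_or_nonempty with h0 | hne
      · rw [h0]
        refine ⟨fun _ => 0, by simp, ?_⟩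
        intro e he hsub
        exfalso
        have h1 : e.card = rb := hBE e he
        obtain ⟨x, hx⟩ := Finset.card_pos.1 (by omega : 0 < e.card)
        exact absurd (hsub hx) (Finset.notMem_empty x)
      · obtain ⟨-, hinv1, hinv4⟩ := (hrec p hp).2 hne
        refine ih p.1 p.2 (μ + (ε/2)^(d+1)) (by omega) hinv1 ?_ ?_ ?_
        · have : (0:ℝ) ≤ (ε/2)^(d+1) := by positivity
          linarith
        · have hc : ((n:ℝ)+1) * (ε/2)^(d+1) = (ε/2)^(d+1) + (n:ℝ) * (ε/2)^(d+1) := by ring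
          push_cast at i3 ⊢
          linarith
        · have : T - (n+1-1) = T - n := by omega
          rw [this] at hinv4
          exact hinv4
    have hasm := color_assembly BE rb hrb2 hBE W C (L.map Prod.fst) (gFun rb d n)
      hcover' hcol
    refine hasm.mono ?_
    have h1 : (L.map Prod.fst).length ≤ 2^(rb*d) := by rw [List.length_map]; exact hLl
    have h2 : C.card ≤ rb*d := le_trans hCc (Nat.mul_le_mul_left rb (by omega))
    have h3 : (L.map Prod.fst).length * gFun rb d n ≤ 2^(rb*d) * gFun rb d n :=
      Nat.mul_le_mul_right _ h1
    simp only [gFun]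
    omega

lemma count_wrapper {mh : ℕ} (H : Finset (Finset (Fin mh)))
    (BE : Finset (Finset V)) (γ : V → Finset (Finset F))
    (rγ d T : ℕ) (ε N : ℝ)
    (hd : 0 < d)
    (hε0 : 0 < ε) (hε1 : ε ≤ 1)
    (hN0 : 0 < N)
    (hBE : ∀ e ∈ BE, e.card = 1)
    (hγc : ∀ b, ∀ e ∈ γ b, e.card = rγ)
    (hdim : ¬ HasBundleDim BE γ H d)
    (hEmb : ∀ G : Finset (Finset F), (∀ e ∈ G, e.card = rγ) →
      (ε/2) ^ (T + d) * N < (G.card : ℝ) → Embeds H G) :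
    ∀ (n : ℕ) (W : Finset V) (Ω : Finset (Finset F)) (μ : ℝ), n ≤ T →
    (∀ v ∈ W, μ * (Ω.card : ℝ) ≤ ((γ v ∩ Ω).card : ℝ)) →
    ε ≤ μ →
    1 - 1 / (2 * (d : ℝ)) ≤ μ + (n : ℝ) * (ε/2) ^ (d+1) →
    (ε/2) ^ (T - n) * N ≤ (Ω.card : ℝ) →
    (BE.filter (fun e => e ⊆ W)).card ≤ gcFun 1 d n := by
  intro n
  induction n with
  | zero =>
    intro W Ω μ hn i1 i2 i3 i4
    obtain ⟨C, L, hCW, hCc, hLl, hcover, hrec⟩ := core_lemma H BE γ 1 rγ d T ε N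
      (le_refl 1) hd hε0 hε1 hN0 hBE hγc hdim hEmb 0 W Ω μ hn i1 i2 i3 i4
    have hcnt : ∀ P ∈ L.map Prod.fst, (BE.filter (fun e => e ⊆ P)).card ≤ 0 := by
      intro P hP
      obtain ⟨p, hp, rfl⟩ := List.mem_map.1 hP
      rcases p.1.eq_empty_or_nonempty with h0 | hne
      · rw [h0]
        rw [Nat.le_zero, Finset.card_eq_zero]
        rw [Finset.filter_eq_empty_iff]
        intro e he hsub
        have h1 : e.card = 1 := hBE e he
        obtain ⟨x, hx⟩ := Finset.card_pos.1 (by omega : 0 < e.card)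
        exact absurd (hsub hx) (Finset.notMem_empty x)
      · exact absurd ((hrec p hp).2 hne).1 (by omega)
    have hasm := count_assembly BE hBE C 0 (L.map Prod.fst) hcnt
      (BE.filter (fun e => e ⊆ W)) (Finset.filter_subset _ _) ?_
    · refine le_trans hasm ?_
      have h1 : (L.map Prod.fst).length ≤ 2^(1*d) := by rw [List.length_map]; exact hLl
      have h2 : C.card ≤ 1*d := le_trans hCc (Nat.mul_le_mul_left 1 (by omega))
      have h3 : 2^C.card ≤ 2^(1*d) := Nat.pow_le_pow_right (by omega) h2
      simp only [gcFun]
      omega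
    · intro e he
      rw [Finset.mem_filter] at he
      rcases hcover e he.1 he.2 with h | ⟨p, hp, hx⟩
      · exact Or.inl h
      · exact Or.inr ⟨p.1, List.mem_map_of_mem hp, hx⟩
  | succ n ih =>
    intro W Ω μ hn i1 i2 i3 i4
    obtain ⟨C, L, hCW, hCc, hLl, hcover, hrec⟩ := core_lemma H BE γ 1 rγ d T ε N
      (le_refl 1) hd hε0 hε1 hN0 hBE hγc hdim hEmb (n+1) W Ω μ hn i1 i2 i3 i4
    have hcnt : ∀ P ∈ L.map Prod.fst, (BE.filter (fun e => e ⊆ P)).card ≤ gcFun 1 d n := by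
      intro P hP
      obtain ⟨p, hp, rfl⟩ := List.mem_map.1 hP
      rcases p.1.eq_empty_or_nonempty with h0 | hne
      · rw [h0]
        have : (BE.filter (fun e => e ⊆ (∅ : Finset V))) = ∅ := by
          rw [Finset.filter_eq_empty_iff]
          intro e he hsub
          have h1 : e.card = 1 := hBE e he
          obtain ⟨x, hx⟩ := Finset.card_pos.1 (by omega : 0 < e.card)
          exact absurd (hsub hx) (Finset.notMem_empty x)
        rw [this]
        simp
      · obtain ⟨-, hinv1, hinv4⟩ := (hrec p hp).2 hne
        refine ih p.1 p.2 (μ + (ε/2)^(d+1)) (by omega) hinv1 ?_ ?_ ?_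
        · have : (0:ℝ) ≤ (ε/2)^(d+1) := by positivity
          linarith
        · push_cast at i3 ⊢
          linarith
        · have : T - (n+1-1) = T - n := by omega
          rw [this] at hinv4
          exact hinv4
    have hasm := count_assembly BE hBE C (gcFun 1 d n) (L.map Prod.fst) hcnt
      (BE.filter (fun e => e ⊆ W)) (Finset.filter_subset _ _) ?_
    · refine le_trans hasm ?_
      have h1 : (L.map Prod.fst).length ≤ 2^(1*d) := by rw [List.length_map]; exact hLl
      have h2 : C.card ≤ 1*d := le_trans hCc (Nat.mul_le_mul_left 1 (by omega))
      have h3 : 2^C.card ≤ 2^(1*d) := Nat.pow_le_pow_right (by omega) h2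
      have h4 : (L.map Prod.fst).length * gcFun 1 d n ≤ 2^(1*d) * gcFun 1 d n :=
        Nat.mul_le_mul_right _ h1
      simp only [gcFun]
      omega
    · intro e he
      rw [Finset.mem_filter] at he
      rcases hcover e he.1 he.2 with h | ⟨p, hp, hx⟩
      · exact Or.inl h
      · exact Or.inr ⟨p.1, List.mem_map_of_mem hp, hx⟩

end Aux

/-- Theorem (conditional coloring theorem): suppose `0 < ε < (1/4)·r_b^{-d}` and `H` is an
`r_γ`-uniform hypergraph with Turán density zero. There exist `0 < λ < ε` and constants
`L₁, L₂` such that any `(r_b, r_γ)`-uniform fiber bundle with `dim_H < d`, fibers of density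
at least `ε`, `|F| ≥ L₁`, and `|γ(x) ∩ γ(y)| ≤ λ·C(|F|, r_γ)` for all pairs `x ≠ y` inside an
edge, satisfies: if `r_b = 1` then `B` has at most `L₂` edges, and if `r_b ≥ 2` then
`χ(B) ≤ L₂`. -/
theorem conditional_fiber_bundle_coloring
    (rb rγ d : ℕ) (hrb : 1 ≤ rb) (hrγ : 1 ≤ rγ) (hd : 0 < d)
    (ε : ℝ) (hε0 : 0 < ε) (hε1 : ε < (1 / 4) * ((rb : ℝ) ^ d)⁻¹)
    (mh : ℕ) (H : Finset (Finset (Fin mh))) (hH : ∀ e ∈ H, e.card = rγ)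
    (hπ : Filter.Tendsto (fun N : ℕ => (exNum rγ H N : ℝ) / (N.choose rγ : ℝ))
      Filter.atTop (nhds 0)) :
    ∃ lam : ℝ, ∃ L₁ L₂ : ℕ, 0 < lam ∧ lam < ε ∧
      ∀ (nb nf : ℕ) (BE : Finset (Finset (Fin nb)))
        (γ : Fin nb → Finset (Finset (Fin nf))),
        (∀ e ∈ BE, e.card = rb) →
        (∀ b : Fin nb, ∀ e ∈ γ b, e.card = rγ) →
        ¬ HasBundleDim BE γ H d →
        (∀ b : Fin nb, ε * (nf.choose rγ : ℝ) ≤ ((γ b).card : ℝ)) →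
        L₁ ≤ nf →
        (∀ E ∈ BE, ∀ x ∈ E, ∀ y ∈ E, x ≠ y →
          (((γ x ∩ γ y).card : ℝ)) ≤ lam * (nf.choose rγ : ℝ)) →
        ((rb = 1 → BE.card ≤ L₂) ∧ (2 ≤ rb → ChromAtMost BE L₂)) := by
  classical
  have hrbpow : (1:ℝ) ≤ (rb:ℝ)^d := one_le_pow₀ (by exact_mod_cast hrb)
  have hε1' : ε ≤ 1 := by
    have h1 : ((rb:ℝ)^d)⁻¹ ≤ 1 := inv_le_one_of_one_le₀ hrbpow
    nlinarith
  have hc₀ : (0:ℝ) < (ε/2)^(d+1) := by positivity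
  set T : ℕ := ⌈((ε/2)^(d+1))⁻¹⌉₊ with hT
  have hτ : (0:ℝ) < (ε/2)^(T+d) := by positivity
  have hev : ∀ᶠ m in Filter.atTop,
      (exNum rγ H m : ℝ) / (m.choose rγ : ℝ) < (ε/2)^(T+d) :=
    hπ.eventually_lt_const hτ
  obtain ⟨L₀, hL₀⟩ := Filter.eventually_atTop.1 hev
  refine ⟨ε/2, max rγ L₀, max (gFun rb d T) (gcFun 1 d T), by positivity, by linarith, ?_⟩
  intro nb nf BE γ hBE hγc hdim hdens hL1 _hlam
  have hrγnf : rγ ≤ nf := le_trans (le_max_left _ _) hL1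
  have hNpos : (0:ℝ) < (nf.choose rγ : ℝ) := by exact_mod_cast Nat.choose_pos hrγnf
  have hExlt : (exNum rγ H nf : ℝ) < (ε/2)^(T+d) * (nf.choose rγ : ℝ) := by
    have h := hL₀ nf (le_trans (le_max_right _ _) hL1)
    rw [div_lt_iff₀ hNpos] at h
    linarith
  have hEmb : ∀ G : Finset (Finset (Fin nf)), (∀ e ∈ G, e.card = rγ) →
      (ε/2)^(T+d) * ((nf.choose rγ : ℕ) : ℝ) < (G.card : ℝ) → Embeds H G := by
    intro G hG hcard
    apply embeds_of_exNum_lt H G hG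
    have h : (exNum rγ H nf : ℝ) < (G.card : ℝ) := lt_trans hExlt hcard
    exact_mod_cast h
  set Ω : Finset (Finset (Fin nf)) := Finset.powersetCard rγ Finset.univ with hΩ
  have hΩcard : Ω.card = nf.choose rγ := by
    rw [hΩ, Finset.card_powersetCard, Finset.card_univ, Fintype.card_fin]
  have hγΩ : ∀ b, γ b ⊆ Ω := by
    intro b e he
    rw [hΩ, Finset.mem_powersetCard]
    exact ⟨Finset.subset_univ e, hγc b e he⟩
  have hinv1 : ∀ v ∈ (Finset.univ : Finset (Fin nb)),
      ε * (Ω.card:ℝ) ≤ ((γ v ∩ Ω).card:ℝ) := by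
    intro v _
    rw [Finset.inter_eq_left.2 (hγΩ v), hΩcard]
    exact hdens v
  have hdpos : (0:ℝ) < (d:ℝ) := by exact_mod_cast hd
  have hinv3 : 1 - 1/(2*(d:ℝ)) ≤ ε + (T:ℝ) * (ε/2)^(d+1) := by
    have h1 : (((ε/2)^(d+1))⁻¹ : ℝ) ≤ (T:ℝ) := Nat.le_ceil _
    have h2 : (1:ℝ) ≤ (T:ℝ) * (ε/2)^(d+1) := by
      have h3 : (((ε/2)^(d+1))⁻¹ : ℝ) * (ε/2)^(d+1) = 1 := inv_mul_cancel₀ hc₀.ne'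
      nlinarith
    have h4 : (0:ℝ) < 1/(2*(d:ℝ)) := by positivity
    linarith
  have hinv4 : (ε/2)^(T-T) * ((nf.choose rγ : ℕ):ℝ) ≤ (Ω.card:ℝ) := by
    rw [Nat.sub_self, pow_zero, one_mul, hΩcard]
  constructor
  · intro hrb1
    have hBE1 : ∀ e ∈ BE, e.card = 1 := fun e he => (hBE e he).trans hrb1
    have hcnt := count_wrapper H BE γ rγ d T ε ((nf.choose rγ : ℕ):ℝ) hd hε0 hε1'
      hNpos hBE1 hγc hdim hEmb T Finset.univ Ω ε (le_refl T) hinv1 (le_refl ε)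
      hinv3 hinv4
    have heq : BE.filter (fun e => e ⊆ (Finset.univ : Finset (Fin nb))) = BE :=
      Finset.filter_true_of_mem (fun e _ => Finset.subset_univ e)
    rw [heq] at hcnt
    exact le_trans hcnt (le_max_right _ _)
  · intro hrb2
    have hcol := color_wrapper H BE γ rb rγ d T ε ((nf.choose rγ : ℕ):ℝ) hrb hrb2 hd
      hε0 hε1' hNpos hBE hγc hdim hEmb T Finset.univ Ω ε (le_refl T) hinv1 (le_refl ε)
      hinv3 hinv4
    obtain ⟨f, hf1, hf2⟩ := hcol
    have hlt : ∀ v, f v < max (gFun rb d T) (gcFun 1 d T) :=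
      fun v => lt_of_lt_of_le (hf1 v (Finset.mem_univ v)) (le_max_left _ _)
    refine ⟨fun v => ⟨f v, hlt v⟩, ?_⟩
    intro e he
    obtain ⟨x, hx, y, hy, hxy⟩ := hf2 e he (Finset.subset_univ e)
    exact ⟨x, hx, y, hy, fun hc => hxy (congrArg Fin.val hc)⟩
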